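/- Let Λ : (-∞, π²/(2σ²)) → ℝ be defined by Λ(θ) = (√(2θ)/σ)·tan(σ√(2θ)/2)·S₀ for 0 ≤ θ < π²/(2σ²) and Λ(θ) = −(√(−2θ)/σ)·tanh(σ√(−2θ)/2)·S₀ for θ ≤ 0, where σ, S₀ > 0. Then Λ is differentiable on its domain (including at θ = 0), and Λ'(θ) → +∞ as θ ↑ π²/(2σ²). -/

import Mathlib

open Real Filter

/-- The limiting cumulant generating function of `(1/T)∫₀ᵀ S_t dt` in the
square-root (CEV `β = 1/2`) model, on its finiteness domain `θ < π²/(2σ²)`. -/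
noncomputable def cumulantSqrt (σ S₀ θ : ℝ) : ℝ :=
  if 0 ≤ θ then Real.sqrt (2 * θ) / σ * Real.tan (σ * Real.sqrt (2 * θ) / 2) * S₀
  else -Real.sqrt (-2 * θ) / σ * Real.tanh (σ * Real.sqrt (-2 * θ) / 2) * S₀

lemma tanh_hasDerivAt (x : ℝ) : HasDerivAt Real.tanh (1 / Real.cosh x ^ 2) x := by
  have h := (Real.hasDerivAt_sinh x).div (Real.hasDerivAt_cosh x) (Real.cosh_pos x).ne'
  have e : (Real.sinh / Real.cosh) = Real.tanh := by
    funext y; rw [Pi.div_apply, Real.tanh_eq_sinh_div_cosh]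
  rw [e] at h
  refine h.congr_deriv ?_
  rw [show Real.cosh x * Real.cosh x - Real.sinh x * Real.sinh x
      = Real.cosh x ^ 2 - Real.sinh x ^ 2 by ring, Real.cosh_sq_sub_sinh_sq]

section main
variable {σ S₀ : ℝ}

/-- Derivative formula on `(0, b)`. -/
lemma hasDerivAt_pos (hσ : 0 < σ) {θ : ℝ} (h0 : 0 < θ) (hb : θ < π ^ 2 / (2 * σ ^ 2)) :
    HasDerivAt (cumulantSqrt σ S₀)
      (Real.tan (σ * Real.sqrt (2 * θ) / 2) * (S₀ / (σ * Real.sqrt (2 * θ)))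
        + S₀ * (1 / (2 * Real.cos (σ * Real.sqrt (2 * θ) / 2) ^ 2))) θ := by
  have h2θ : (0:ℝ) < 2 * θ := by linarith
  set s := Real.sqrt (2 * θ) with hs
  have hspos : 0 < s := Real.sqrt_pos.2 h2θ
  have hπσ : (0:ℝ) < π / σ := div_pos Real.pi_pos hσ
  have hslt : s < π / σ := by
    rw [hs, Real.sqrt_lt' hπσ]
    have hxb : θ * (2 * σ ^ 2) < π ^ 2 := (lt_div_iff₀ (by positivity)).1 hb
    rw [div_pow, lt_div_iff₀ (by positivity)]
    nlinarith
  have hult : σ * s / 2 < π / 2 := by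
    rw [div_lt_div_iff₀ (by norm_num) (by norm_num)]
    calc σ * s * 2 < σ * (π / σ) * 2 := by nlinarith
    _ = π * 2 := by field_simp
  have hcos : Real.cos (σ * s / 2) ≠ 0 := by
    refine (Real.cos_pos_of_mem_Ioo ⟨?_, hult⟩).ne'
    have : 0 < σ * s / 2 := by positivity
    linarith [Real.pi_pos]
  have h1 : HasDerivAt (fun x : ℝ => 2 * x) 2 θ := by
    simpa using (hasDerivAt_id θ).const_mul (2:ℝ)
  have h2 : HasDerivAt (fun x : ℝ => Real.sqrt (2 * x)) (1 / (2 * s) * 2) θ :=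
    (Real.hasDerivAt_sqrt h2θ.ne').comp θ h1
  have h3 : HasDerivAt (fun x : ℝ => σ * Real.sqrt (2 * x) / 2)
      (σ * (1 / (2 * s) * 2) / 2) θ := (h2.const_mul σ).div_const 2
  have h4 : HasDerivAt (fun x : ℝ => Real.tan (σ * Real.sqrt (2 * x) / 2))
      (1 / Real.cos (σ * s / 2) ^ 2 * (σ * (1 / (2 * s) * 2) / 2)) θ :=
    by have := (Real.hasDerivAt_tan hcos).comp θ h3; exact this
  have h5 := ((h2.div_const σ).mul h4).mul_const S₀
  have heq : cumulantSqrt σ S₀ =ᶠ[nhds θ]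
      (fun x => Real.sqrt (2 * x) / σ * Real.tan (σ * Real.sqrt (2 * x) / 2) * S₀) := by
    filter_upwards [Ioi_mem_nhds h0] with x hx
    simp only [cumulantSqrt, if_pos (le_of_lt (Set.mem_Ioi.1 hx))]
  rw [← hs] at h5
  clear_value s
  refine (h5.congr_of_eventuallyEq heq).congr_deriv ?_
  field_simp

lemma cumulantSqrt_deriv_zero (hσ : 0 < σ) : HasDerivAt (cumulantSqrt σ S₀) S₀ 0 := by
  rw [hasDerivAt_iff_tendsto_slope]
  have hf0 : cumulantSqrt σ S₀ 0 = 0 := by simp [cumulantSqrt]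
  rw [← nhdsLT_sup_nhdsGT, tendsto_sup]
  constructor
  · -- left : θ < 0, slope = S₀ * tanh v / v with v = σ√(-2θ)/2
    have htanh : Tendsto (fun v : ℝ => Real.tanh v / v) (nhdsWithin 0 {(0:ℝ)}ᶜ) (nhds 1) := by
      have h := tanh_hasDerivAt 0
      rw [hasDerivAt_iff_tendsto_slope] at h
      simp only [Real.cosh_zero, one_pow, div_one] at h
      refine h.congr ?_
      intro v
      simp [slope_def_field, Real.tanh_eq_sinh_div_cosh]
    have hv : Tendsto (fun θ : ℝ => σ * Real.sqrt (-2 * θ) / 2) (nhdsWithin 0 (Set.Iio 0))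
        (nhdsWithin 0 {(0:ℝ)}ᶜ) := by
      rw [tendsto_nhdsWithin_iff]
      constructor
      · have hc : ContinuousAt (fun θ : ℝ => σ * Real.sqrt (-2 * θ) / 2) 0 := by fun_prop
        have h := hc.tendsto.mono_left (nhdsWithin_le_nhds (s := Set.Iio (0:ℝ)))
        convert h using 2
        simp
      · filter_upwards [self_mem_nhdsWithin] with x hx
        have hx' : x < 0 := hx
        have h1 : (0:ℝ) < -2 * x := by linarith
        have := Real.sqrt_pos.2 h1
        simp only [Set.mem_compl_iff, Set.mem_singleton_iff]
        positivity
    have hcomp := (htanh.comp hv).const_mul S₀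
    simp only [mul_one] at hcomp
    refine hcomp.congr' ?_
    filter_upwards [self_mem_nhdsWithin] with x hx
    have hx0 : x < 0 := hx
    simp only [Function.comp, slope_def_field, hf0, cumulantSqrt, if_neg (not_le.2 hx0),
      sub_zero]
    set s := Real.sqrt (-2 * x) with hsdef
    have hs2 : s ^ 2 = -2 * x := Real.sq_sqrt (by linarith)
    have hspos : 0 < s := Real.sqrt_pos.2 (by linarith)
    clear_value s
    have hx2 : x = -(s ^ 2) / 2 := by linarith
    subst hx2
    field_simp
    simp
  · -- right : θ > 0, slope = S₀ * tan u / u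
    have htan : Tendsto (fun v : ℝ => Real.tan v / v) (nhdsWithin 0 {(0:ℝ)}ᶜ) (nhds 1) := by
      have h := Real.hasDerivAt_tan (x := 0) (by simp)
      rw [hasDerivAt_iff_tendsto_slope] at h
      simp only [Real.cos_zero, one_pow, div_one] at h
      refine h.congr ?_
      intro v
      simp [slope_def_field]
    have hv : Tendsto (fun θ : ℝ => σ * Real.sqrt (2 * θ) / 2) (nhdsWithin 0 (Set.Ioi 0))
        (nhdsWithin 0 {(0:ℝ)}ᶜ) := by
      rw [tendsto_nhdsWithin_iff]
      constructor
      · have hc : ContinuousAt (fun θ : ℝ => σ * Real.sqrt (2 * θ) / 2) 0 := by fun_prop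
        have h := hc.tendsto.mono_left (nhdsWithin_le_nhds (s := Set.Ioi (0:ℝ)))
        convert h using 2
        simp
      · filter_upwards [self_mem_nhdsWithin] with x hx
        have hx' : (0:ℝ) < x := hx
        have h1 : (0:ℝ) < 2 * x := by linarith
        have := Real.sqrt_pos.2 h1
        simp only [Set.mem_compl_iff, Set.mem_singleton_iff]
        positivity
    have hcomp := (htan.comp hv).const_mul S₀
    simp only [mul_one] at hcomp
    refine hcomp.congr' ?_
    filter_upwards [self_mem_nhdsWithin] with x hx
    have hx0 : (0:ℝ) < x := hx
    simp only [Function.comp, slope_def_field, hf0, cumulantSqrt, if_pos hx0.le, sub_zero]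
    set s := Real.sqrt (2 * x) with hsdef
    have hs2 : s ^ 2 = 2 * x := Real.sq_sqrt (by linarith)
    have hspos : 0 < s := Real.sqrt_pos.2 (by linarith)
    clear_value s
    have hx2 : x = s ^ 2 / 2 := by linarith
    subst hx2
    field_simp
    simp

lemma diff_neg (hσ : 0 < σ) {θ : ℝ} (hθ : θ < 0) :
    DifferentiableAt ℝ (cumulantSqrt σ S₀) θ := by
  have h2θ : (0:ℝ) < -2 * θ := by linarith
  have h1 : HasDerivAt (fun x : ℝ => -2 * x) (-2) θ := by
    simpa using (hasDerivAt_id θ).const_mul (-2:ℝ)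
  have h2 : DifferentiableAt ℝ (fun x : ℝ => Real.sqrt (-2 * x)) θ :=
    ((Real.hasDerivAt_sqrt h2θ.ne').comp θ h1).differentiableAt
  have htanh : Differentiable ℝ Real.tanh := fun x => (tanh_hasDerivAt x).differentiableAt
  have h3 : DifferentiableAt ℝ
      (fun x => -Real.sqrt (-2 * x) / σ * Real.tanh (σ * Real.sqrt (-2 * x) / 2) * S₀) θ :=
    (((h2.neg.div_const σ).mul
      ((htanh _).comp θ (((h2.const_mul σ)).div_const 2))).mul_const S₀)
  refine h3.congr_of_eventuallyEq ?_
  filter_upwards [Iio_mem_nhds hθ] with x hx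
  have hx' : x < 0 := hx
  simp only [cumulantSqrt, if_neg (not_le.2 hx')]

end main

theorem stmt5 (σ S₀ : ℝ) (hσ : 0 < σ) (hS₀ : 0 < S₀) :
    (∀ θ : ℝ, θ < π ^ 2 / (2 * σ ^ 2) → DifferentiableAt ℝ (cumulantSqrt σ S₀) θ) ∧
    Tendsto (deriv (cumulantSqrt σ S₀)) (nhdsWithin (π ^ 2 / (2 * σ ^ 2)) (Set.Iio (π ^ 2 / (2 * σ ^ 2)))) atTop := by
  set b := π ^ 2 / (2 * σ ^ 2) with hbdef
  have hbpos : 0 < b := by positivity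
  have hsqrtb : Real.sqrt (2 * b) = π / σ := by
    rw [hbdef, show 2 * (π ^ 2 / (2 * σ ^ 2)) = (π / σ) ^ 2 by field_simp]
    exact Real.sqrt_sq (by positivity)
  constructor
  · intro θ hθ
    rcases lt_trichotomy θ 0 with h | h | h
    · exact diff_neg hσ h
    · subst h; exact (cumulantSqrt_deriv_zero hσ).differentiableAt
    · exact (hasDerivAt_pos hσ h hθ).differentiableAt
  · -- derivative blows up
    have hub : Tendsto (fun θ : ℝ => σ * Real.sqrt (2 * θ) / 2) (nhdsWithin b (Set.Iio b))
        (nhdsWithin (π / 2) (Set.Iio (π / 2))) := by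
      rw [tendsto_nhdsWithin_iff]
      constructor
      · have hc : ContinuousAt (fun θ : ℝ => σ * Real.sqrt (2 * θ) / 2) b := by fun_prop
        have h := hc.tendsto.mono_left (nhdsWithin_le_nhds (s := Set.Iio b))
        convert h using 2
        rw [hsqrtb]
        field_simp
      · filter_upwards [self_mem_nhdsWithin] with x hx
        have hπσ : (0:ℝ) < π / σ := by positivity
        have hxb : x < b := hx
        have hslt : Real.sqrt (2 * x) < π / σ := by
          rw [Real.sqrt_lt' hπσ]
          have h2 : x * (2 * σ ^ 2) < π ^ 2 := by
            rw [hbdef] at hxb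
            exact (lt_div_iff₀ (by positivity)).1 hxb
          rw [div_pow, lt_div_iff₀ (by positivity)]
          nlinarith
        simp only [Set.mem_Iio]
        calc σ * Real.sqrt (2 * x) / 2 < σ * (π / σ) / 2 := by
              have := Real.sqrt_nonneg (2 * x); nlinarith
          _ = π / 2 := by field_simp
    have htan : Tendsto (fun θ : ℝ => Real.tan (σ * Real.sqrt (2 * θ) / 2))
        (nhdsWithin b (Set.Iio b)) atTop := Real.tendsto_tan_pi_div_two.comp hub
    have hden : Tendsto (fun θ : ℝ => S₀ / (σ * Real.sqrt (2 * θ)))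
        (nhdsWithin b (Set.Iio b)) (nhds (S₀ / π)) := by
      have hc : ContinuousAt (fun θ : ℝ => S₀ / (σ * Real.sqrt (2 * θ))) b := by
        apply ContinuousAt.div
        · fun_prop
        · fun_prop
        · rw [hsqrtb]; field_simp; positivity
      have h := hc.tendsto.mono_left (nhdsWithin_le_nhds (s := Set.Iio b))
      convert h using 2
      rw [hsqrtb]
      field_simp
    have hmain : Tendsto (fun θ : ℝ =>
        Real.tan (σ * Real.sqrt (2 * θ) / 2) * (S₀ / (σ * Real.sqrt (2 * θ)))
          + S₀ * (1 / (2 * Real.cos (σ * Real.sqrt (2 * θ) / 2) ^ 2)))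
        (nhdsWithin b (Set.Iio b)) atTop := by
      refine Tendsto.atTop_add_nonneg (htan.atTop_mul_pos (by positivity) hden) ?_
      intro x
      positivity
    refine hmain.congr' ?_
    filter_upwards [Ioo_mem_nhdsLT_of_mem (Set.mem_Ioc.2 ⟨hbpos, le_refl b⟩)] with x hx
    exact ((hasDerivAt_pos hσ hx.1 hx.2).deriv).symm
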